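/- Let m ≥ 1 and i ≥ 2 be integers and fix a real s > 1. Let (Ω, F, ℙ) be a probability space with a filtration (F_t)_{t≥i} and let (d_t)_{t≥i} be an adapted, integrable, nonnegative process such that for every t ≥ i, E[d_{t+1} | F_t] = d_t·(1 - e_t) + m·c_t almost surely. Then: (a) the series ∑_{k=t}^{∞} c_k / ( ∑_{l=i}^{k-1} ln(1 + c_l) )^s converges for every t ≥ i+1; and (b) the process S_t := d_t / ( ∑_{l=i}^{t-1} ln(1 + c_l) )^s + m·∑_{k=t}^{∞} c_k / ( ∑_{l=i}^{k-1} ln(1 + c_l) )^s, for t ≥ i+1, is a nonnegative supermartingale with respect to (F_t), and hence converges almost surely to a nonnegative integrable random variable. -/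

import Mathlib

open Filter MeasureTheory

/-- `c_l = (2ml+1)/(l(2ml+1-2m))`. -/
noncomputable def cPAAPA (m l : ℕ) : ℝ :=
  (2 * (m : ℝ) * l + 1) / ((l : ℝ) * (2 * (m : ℝ) * l + 1 - 2 * m))

/-- `e_l = m/(l(2ml+1-2m))`. -/
noncomputable def ePAAPA (m l : ℕ) : ℝ :=
  (m : ℝ) / ((l : ℝ) * (2 * (m : ℝ) * l + 1 - 2 * m))

namespace PAAPAAux

lemma den_pos {m l : ℕ} (hm : 1 ≤ m) (hl : 1 ≤ l) :
    0 < (l : ℝ) * (2 * (m : ℝ) * l + 1 - 2 * m) := by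
  have hm' : (1:ℝ) ≤ m := by exact_mod_cast hm
  have hl' : (1:ℝ) ≤ l := by exact_mod_cast hl
  nlinarith [mul_nonneg (mul_nonneg (by linarith : (0:ℝ) ≤ (m:ℝ)) (by linarith : (0:ℝ) ≤ (l:ℝ))) (by linarith : (0:ℝ) ≤ (l:ℝ) - 1)]

lemma c_pos {m l : ℕ} (hm : 1 ≤ m) (hl : 1 ≤ l) : 0 < cPAAPA m l := by
  have hm' : (1:ℝ) ≤ m := by exact_mod_cast hm
  have hl' : (1:ℝ) ≤ l := by exact_mod_cast hl
  exact div_pos (by nlinarith) (den_pos hm hl)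


lemma c_le_one {m l : ℕ} (hm : 1 ≤ m) (hl : 2 ≤ l) : cPAAPA m l ≤ 1 := by
  have hm' : (1:ℝ) ≤ m := by exact_mod_cast hm
  have hl' : (2:ℝ) ≤ l := by exact_mod_cast hl
  rw [cPAAPA, div_le_one (den_pos hm (by omega))]
  nlinarith [mul_nonneg (mul_nonneg (by linarith : (0:ℝ) ≤ (m:ℝ)) (by linarith : (0:ℝ) ≤ (l:ℝ))) (by linarith : (0:ℝ) ≤ (l:ℝ) - 1), mul_nonneg (mul_nonneg (by linarith : (0:ℝ) ≤ (m:ℝ)) (by linarith : (0:ℝ) ≤ (l:ℝ))) (by linarith : (0:ℝ) ≤ (l:ℝ) - 2), mul_nonneg (by linarith : (0:ℝ) ≤ (m:ℝ)) (by linarith : (0:ℝ) ≤ (l:ℝ) - 1)]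

lemma e_nonneg {m l : ℕ} (hm : 1 ≤ m) (hl : 1 ≤ l) : 0 ≤ ePAAPA m l :=
  div_nonneg (by positivity) (den_pos hm hl).le

lemma e_le_one {m l : ℕ} (hm : 1 ≤ m) (hl : 2 ≤ l) : ePAAPA m l ≤ 1 := by
  have hm' : (1:ℝ) ≤ m := by exact_mod_cast hm
  have hl' : (2:ℝ) ≤ l := by exact_mod_cast hl
  rw [ePAAPA, div_le_one (den_pos hm (by omega))]
  nlinarith [mul_nonneg (mul_nonneg (by linarith : (0:ℝ) ≤ (m:ℝ)) (by linarith : (0:ℝ) ≤ (l:ℝ))) (by linarith : (0:ℝ) ≤ (l:ℝ) - 1), mul_nonneg (mul_nonneg (by linarith : (0:ℝ) ≤ (m:ℝ)) (by linarith : (0:ℝ) ≤ (l:ℝ))) (by linarith : (0:ℝ) ≤ (l:ℝ) - 2), mul_nonneg (by linarith : (0:ℝ) ≤ (m:ℝ)) (by linarith : (0:ℝ) ≤ (l:ℝ) - 1)]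

end PAAPAAux

noncomputable def paA (m i t : ℕ) : ℝ := ∑ l ∈ Finset.Ico i t, Real.log (1 + cPAAPA m l)


namespace PAAPAAux

lemma log_c_pos {m l : ℕ} (hm : 1 ≤ m) (hl : 2 ≤ l) : 0 < Real.log (1 + cPAAPA m l) :=
  Real.log_pos (by linarith [c_pos hm (by omega : 1 ≤ l)])

lemma log_c_le {m l : ℕ} (hm : 1 ≤ m) (hl : 2 ≤ l) : Real.log (1 + cPAAPA m l) ≤ Real.log 2 :=
  Real.log_le_log (by linarith [c_pos hm (by omega : 1 ≤ l)]) (by linarith [c_le_one hm hl])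

lemma paA_mono {m i : ℕ} (hm : 1 ≤ m) (hi : 2 ≤ i) {t t' : ℕ} (h : t ≤ t') :
    paA m i t ≤ paA m i t' := by
  apply Finset.sum_le_sum_of_subset_of_nonneg (Finset.Ico_subset_Ico le_rfl h)
  intro l hl _
  exact (log_c_pos hm (le_trans hi (Finset.mem_Ico.1 hl).1)).le

lemma paA_succ {m i t : ℕ} (h : i ≤ t) :
    paA m i (t + 1) = paA m i t + Real.log (1 + cPAAPA m t) :=
  Finset.sum_Ico_succ_top h _

lemma paA_base {m i : ℕ} : paA m i (i + 1) = Real.log (1 + cPAAPA m i) := by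
  rw [paA, Nat.Ico_succ_singleton, Finset.sum_singleton]

lemma paA_pos {m i : ℕ} (hm : 1 ≤ m) (hi : 2 ≤ i) {t : ℕ} (ht : i + 1 ≤ t) :
    0 < paA m i t :=
  lt_of_lt_of_le (by rw [paA_base]; exact log_c_pos hm hi) (paA_mono hm hi ht)

lemma half_le_log {x : ℝ} (hx0 : 0 ≤ x) (hx1 : x ≤ 1) : x / 2 ≤ Real.log (1 + x) := by
  have h1 : (0:ℝ) < 1 + x := by linarith
  have h2 := Real.one_sub_inv_le_log_of_pos h1
  have h3 : 1 - (1 + x)⁻¹ = x / (1 + x) := by field_simp; ring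
  have h4 : x / 2 ≤ x / (1 + x) := by
    apply div_le_div_of_nonneg_left hx0 h1 (by linarith)
  linarith

end PAAPAAux

namespace PAAPAAux

lemma key_ineq {m i : ℕ} (hm : 1 ≤ m) (hi : 2 ≤ i) {s : ℝ} (hs : 1 < s)
    {k : ℕ} (hk : i + 1 ≤ k) :
    cPAAPA m k / paA m i k ^ s ≤
      (2 * (1 + Real.log 2 / paA m i (i + 1)) ^ s / (s - 1)) *
        (paA m i k ^ (1 - s) - paA m i (k + 1) ^ (1 - s)) := by
  have hk2 : 2 ≤ k := by omega
  set a := paA m i k with ha_def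
  set b := paA m i (k + 1) with hb_def
  set a0 := paA m i (i + 1) with ha0_def
  set δ := Real.log (1 + cPAAPA m k) with hδ_def
  set c := cPAAPA m k with hc_def
  have ha0 : 0 < a0 := paA_pos hm hi le_rfl
  have ha : 0 < a := paA_pos hm hi hk
  have ha0a : a0 ≤ a := paA_mono hm hi hk
  have hδpos : 0 < δ := log_c_pos hm hk2
  have hb_eq : b = a + δ := paA_succ (by omega)
  have hb : 0 < b := by rw [hb_eq]; linarith
  have hδ2 : δ ≤ Real.log 2 := log_c_le hm hk2
  have hcpos : 0 < c := c_pos hm (by omega)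
  have hc1 : c ≤ 1 := c_le_one hm hk2
  have hc2δ : c ≤ 2 * δ := by
    have := half_le_log hcpos.le hc1
    linarith
  set R := 1 + Real.log 2 / a0 with hR_def
  have hR1 : 1 ≤ R := by
    have : 0 ≤ Real.log 2 / a0 := div_nonneg (Real.log_nonneg (by norm_num)) ha0.le
    rw [hR_def]; linarith
  have hbRa : b ≤ R * a := by
    have h1 : δ ≤ Real.log 2 / a0 * a := by
      rw [div_mul_eq_mul_div, le_div_iff₀ ha0]
      exact mul_le_mul hδ2 ha0a ha0.le (Real.log_nonneg (by norm_num))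
    calc b = a + δ := hb_eq
      _ ≤ a + Real.log 2 / a0 * a := by linarith
      _ = R * a := by rw [hR_def]; ring
  have hlogba : δ / b ≤ Real.log (b / a) := by
    have h1 : (0:ℝ) < b / a := div_pos hb ha
    have h2 := Real.one_sub_inv_le_log_of_pos h1
    have h3 : (b / a)⁻¹ = a / b := by rw [inv_div]
    have h4 : 1 - a / b = δ / b := by
      rw [eq_div_iff hb.ne', sub_mul, one_mul, div_mul_eq_mul_div, mul_div_assoc,
        div_self hb.ne', mul_one, hb_eq]; ring
    rw [h3, h4] at h2; exact h2
  have hpow : 1 + (s - 1) * (δ / b) ≤ (b / a) ^ (s - 1) := by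
    have h1 : (b / a) ^ (s - 1) = Real.exp ((s - 1) * Real.log (b / a)) := by
      rw [Real.rpow_def_of_pos (div_pos hb ha), mul_comm]
    rw [h1]
    calc 1 + (s - 1) * (δ / b) ≤ 1 + (s - 1) * Real.log (b / a) := by
          have := mul_le_mul_of_nonneg_left hlogba (by linarith : (0:ℝ) ≤ s - 1)
          linarith
      _ ≤ Real.exp ((s - 1) * Real.log (b / a)) := by
          linarith [Real.add_one_le_exp ((s - 1) * Real.log (b / a))]
  have has1 : (0:ℝ) < a ^ (s - 1) := Real.rpow_pos_of_pos ha _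
  have keyb : b ^ (1 - s) * b ^ (s - 1) = 1 := by
    rw [← Real.rpow_add hb]; norm_num
  have keya : a ^ (1 - s) * a ^ (s - 1) = 1 := by
    rw [← Real.rpow_add ha]; norm_num
  have hA : a ^ (1 - s) = 1 / a ^ (s - 1) := by
    rw [eq_div_iff has1.ne']; exact keya
  have hiden : a ^ (1 - s) - b ^ (1 - s) = b ^ (1 - s) * ((b / a) ^ (s - 1) - 1) := by
    rw [Real.div_rpow hb.le ha.le, mul_sub, mul_one, mul_div_assoc', keyb, ← hA]
  have hb1s : 0 < b ^ (1 - s) := Real.rpow_pos_of_pos hb _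
  have hsplit : b ^ (1 - s) = b ^ (-s) * b := by
    rw [show (1 - s) = (-s) + 1 by ring, Real.rpow_add_one hb.ne']
  have hiii : (s - 1) * δ * b ^ (-s) ≤ a ^ (1 - s) - b ^ (1 - s) := by
    rw [hiden]
    have h1 : (s - 1) * (δ / b) ≤ (b / a) ^ (s - 1) - 1 := by linarith
    have h2 := mul_le_mul_of_nonneg_left h1 hb1s.le
    have h3 : b ^ (1 - s) * ((s - 1) * (δ / b)) = (s - 1) * δ * b ^ (-s) := by
      rw [hsplit]; field_simp
    linarith
  have hRs : 0 < R ^ s := Real.rpow_pos_of_pos (by linarith) _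
  have has : 0 < a ^ s := Real.rpow_pos_of_pos ha _
  have hbs : 0 < b ^ s := Real.rpow_pos_of_pos hb _
  have hiv : a ^ (-s) ≤ R ^ s * b ^ (-s) := by
    have h1 : b ^ s ≤ R ^ s * a ^ s := by
      calc b ^ s ≤ (R * a) ^ s := Real.rpow_le_rpow hb.le hbRa (by linarith)
        _ = R ^ s * a ^ s := Real.mul_rpow (by linarith) ha.le
    have h5 : (a ^ s)⁻¹ * b ^ s ≤ (a ^ s)⁻¹ * (R ^ s * a ^ s) :=
      mul_le_mul_of_nonneg_left h1 (inv_nonneg.2 has.le)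
    have h7 : (a ^ s)⁻¹ * (R ^ s * a ^ s) = R ^ s := by field_simp
    rw [Real.rpow_neg ha.le, Real.rpow_neg hb.le,
      show R ^ s * (b ^ s)⁻¹ = R ^ s / b ^ s from (div_eq_mul_inv _ _).symm,
      le_div_iff₀ hbs]
    calc (a ^ s)⁻¹ * b ^ s ≤ (a ^ s)⁻¹ * (R ^ s * a ^ s) := h5
      _ = R ^ s := h7
  have hans : 0 < a ^ (-s) := Real.rpow_pos_of_pos ha _
  calc c / a ^ s = c * a ^ (-s) := by
        rw [Real.rpow_neg ha.le, div_eq_mul_inv]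
    _ ≤ 2 * δ * a ^ (-s) := mul_le_mul_of_nonneg_right hc2δ hans.le
    _ ≤ 2 * δ * (R ^ s * b ^ (-s)) :=
        mul_le_mul_of_nonneg_left hiv (by linarith)
    _ = (2 * R ^ s / (s - 1)) * ((s - 1) * δ * b ^ (-s)) := by
        have hss : s - 1 ≠ 0 := ne_of_gt (by linarith)
        field_simp
    _ ≤ (2 * R ^ s / (s - 1)) * (a ^ (1 - s) - b ^ (1 - s)) := by
        have hM : 0 < 2 * R ^ s / (s - 1) := div_pos (by linarith) (by linarith)
        exact mul_le_mul_of_nonneg_left hiii hM.le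

end PAAPAAux

namespace PAAPAAux

lemma term_nonneg {m i : ℕ} (hm : 1 ≤ m) (hi : 2 ≤ i) {s : ℝ} {k : ℕ} (hk : i + 1 ≤ k) :
    0 ≤ cPAAPA m k / paA m i k ^ s :=
  div_nonneg (c_pos hm (by omega)).le (Real.rpow_pos_of_pos (paA_pos hm hi hk) _).le

lemma summable_main {m i : ℕ} (hm : 1 ≤ m) (hi : 2 ≤ i) {s : ℝ} (hs : 1 < s)
    {t : ℕ} (ht : i + 1 ≤ t) :
    Summable (fun k : ℕ => cPAAPA m (t + k) / paA m i (t + k) ^ s) := by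
  set M := 2 * (1 + Real.log 2 / paA m i (i + 1)) ^ s / (s - 1) with hM_def
  have hR1 : (1:ℝ) ≤ 1 + Real.log 2 / paA m i (i + 1) := by
    have : 0 ≤ Real.log 2 / paA m i (i + 1) :=
      div_nonneg (Real.log_nonneg (by norm_num)) (paA_pos hm hi le_rfl).le
    linarith
  have hM : 0 ≤ M := by
    apply div_nonneg _ (by linarith)
    have : 0 < (1 + Real.log 2 / paA m i (i + 1)) ^ s :=
      Real.rpow_pos_of_pos (by linarith) _
    linarith
  set u : ℕ → ℝ := fun k => paA m i (t + k) ^ (1 - s) with hu_def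
  have hu_nonneg : ∀ k, 0 ≤ u k := fun k =>
    (Real.rpow_pos_of_pos (paA_pos hm hi (by omega)) _).le
  apply summable_of_sum_range_le (c := M * u 0)
  · intro k; exact term_nonneg hm hi (by omega)
  · intro n
    calc ∑ k ∈ Finset.range n, cPAAPA m (t + k) / paA m i (t + k) ^ s
        ≤ ∑ k ∈ Finset.range n, M * (u k - u (k + 1)) := by
          apply Finset.sum_le_sum
          intro k _
          exact key_ineq hm hi hs (by omega : i + 1 ≤ t + k)
      _ = M * (u 0 - u n) := by rw [← Finset.mul_sum, Finset.sum_range_sub' u n]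
      _ ≤ M * u 0 := by
          have := hu_nonneg n
          nlinarith
end PAAPAAux

namespace PAAPAAux

lemma tsum_split {m i : ℕ} (hm : 1 ≤ m) (hi : 2 ≤ i) {s : ℝ} (hs : 1 < s)
    {t : ℕ} (ht : i + 1 ≤ t) :
    (∑' k : ℕ, cPAAPA m (t + k) / paA m i (t + k) ^ s) =
      cPAAPA m t / paA m i t ^ s
        + ∑' k : ℕ, cPAAPA m (t + 1 + k) / paA m i (t + 1 + k) ^ s := by
  rw [(summable_main hm hi hs ht).tsum_eq_zero_add]
  congr 1
  apply tsum_congr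
  intro k
  rw [show t + (k + 1) = t + 1 + k by omega]

lemma tsum_nn {m i : ℕ} (hm : 1 ≤ m) (hi : 2 ≤ i) {s : ℝ} {t : ℕ} (ht : i + 1 ≤ t) :
    0 ≤ ∑' k : ℕ, cPAAPA m (t + k) / paA m i (t + k) ^ s :=
  tsum_nonneg fun k => term_nonneg hm hi (by omega)

end PAAPAAux

open PAAPAAux

/-- The supermartingale construction in the proof of Theorem 3.9 of the paper:
(a) the series `∑_{k=t}^{∞} c_k / (∑_{l=i}^{k-1} ln(1+c_l))^s` converges for every
`t ≥ i+1`, and (b) the process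
`S_t = d_t / (∑_{l=i}^{t-1} ln(1+c_l))^s + m ∑_{k=t}^{∞} c_k / (∑_{l=i}^{k-1} ln(1+c_l))^s`
is a nonnegative supermartingale, hence converges almost surely to a nonnegative
integrable random variable. -/
theorem pa_apa_pure_anti_supermartingale
    {Ω : Type*} {m0 : MeasurableSpace Ω} (μ : Measure Ω) [IsProbabilityMeasure μ]
    (ℱ : Filtration ℕ m0) (m i : ℕ) (hm : 1 ≤ m) (hi : 2 ≤ i)
    (s : ℝ) (hs : 1 < s)
    (d : ℕ → Ω → ℝ) (hadapted : Adapted ℱ d)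
    (hint : ∀ t, Integrable (d t) μ)
    (hnonneg : ∀ t, 0 ≤ᵐ[μ] d t)
    (hcond : ∀ t, i ≤ t →
      μ[d (t + 1) | ℱ t] =ᵐ[μ]
        fun ω => d t ω * (1 - ePAAPA m t) + (m : ℝ) * cPAAPA m t) :
    (∀ t, i + 1 ≤ t →
      Summable (fun k : ℕ =>
        cPAAPA m (t + k) /
          (∑ l ∈ Finset.Ico i (t + k), Real.log (1 + cPAAPA m l)) ^ s)) ∧
    ((∀ t, i + 1 ≤ t →
        (0 ≤ᵐ[μ] fun ω =>
          d t ω / (∑ l ∈ Finset.Ico i t, Real.log (1 + cPAAPA m l)) ^ s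
            + (m : ℝ) * ∑' k : ℕ, cPAAPA m (t + k) /
                (∑ l ∈ Finset.Ico i (t + k), Real.log (1 + cPAAPA m l)) ^ s) ∧
        Integrable (fun ω =>
          d t ω / (∑ l ∈ Finset.Ico i t, Real.log (1 + cPAAPA m l)) ^ s
            + (m : ℝ) * ∑' k : ℕ, cPAAPA m (t + k) /
                (∑ l ∈ Finset.Ico i (t + k), Real.log (1 + cPAAPA m l)) ^ s) μ ∧
        StronglyMeasurable[ℱ t] (fun ω =>
          d t ω / (∑ l ∈ Finset.Ico i t, Real.log (1 + cPAAPA m l)) ^ s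
            + (m : ℝ) * ∑' k : ℕ, cPAAPA m (t + k) /
                (∑ l ∈ Finset.Ico i (t + k), Real.log (1 + cPAAPA m l)) ^ s) ∧
        μ[fun ω =>
            d (t + 1) ω / (∑ l ∈ Finset.Ico i (t + 1), Real.log (1 + cPAAPA m l)) ^ s
              + (m : ℝ) * ∑' k : ℕ, cPAAPA m (t + 1 + k) /
                  (∑ l ∈ Finset.Ico i (t + 1 + k), Real.log (1 + cPAAPA m l)) ^ s
          | ℱ t] ≤ᵐ[μ]
          fun ω =>
            d t ω / (∑ l ∈ Finset.Ico i t, Real.log (1 + cPAAPA m l)) ^ s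
              + (m : ℝ) * ∑' k : ℕ, cPAAPA m (t + k) /
                  (∑ l ∈ Finset.Ico i (t + k), Real.log (1 + cPAAPA m l)) ^ s) ∧
      ∃ X : Ω → ℝ, Integrable X μ ∧
        ∀ᵐ ω ∂μ, 0 ≤ X ω ∧
          Tendsto (fun t : ℕ =>
              d t ω / (∑ l ∈ Finset.Ico i t, Real.log (1 + cPAAPA m l)) ^ s
                + (m : ℝ) * ∑' k : ℕ, cPAAPA m (t + k) /
                    (∑ l ∈ Finset.Ico i (t + k), Real.log (1 + cPAAPA m l)) ^ s)
            atTop (nhds (X ω))) := by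
  -- the process, phrased via `paA`
  have hApos : ∀ t, i + 1 ≤ t → (0:ℝ) < paA m i t ^ s :=
    fun t ht => Real.rpow_pos_of_pos (paA_pos hm hi ht) _
  -- nonnegativity
  have hnn : ∀ t, i + 1 ≤ t →
      (0 ≤ᵐ[μ] fun ω => d t ω / paA m i t ^ s
        + (m : ℝ) * ∑' k : ℕ, cPAAPA m (t + k) / paA m i (t + k) ^ s) := by
    intro t ht
    filter_upwards [hnonneg t] with ω hω
    have h1 := hApos t ht
    have h2 := tsum_nn (s := s) hm hi ht
    simp only [Pi.zero_apply] at hω ⊢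
    exact add_nonneg (div_nonneg hω h1.le) (mul_nonneg (Nat.cast_nonneg m) h2)
  -- integrability
  have hintS : ∀ t, Integrable (fun ω => d t ω / paA m i t ^ s
      + (m : ℝ) * ∑' k : ℕ, cPAAPA m (t + k) / paA m i (t + k) ^ s) μ :=
    fun t => ((hint t).div_const _).add (integrable_const _)
  -- measurability
  have hmeasS : ∀ t, StronglyMeasurable[ℱ t] (fun ω => d t ω / paA m i t ^ s
      + (m : ℝ) * ∑' k : ℕ, cPAAPA m (t + k) / paA m i (t + k) ^ s) :=
    fun t => by
      have h1 : StronglyMeasurable[ℱ t] (fun ω => d t ω * (paA m i t ^ s)⁻¹) :=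
        ((hadapted t).mul measurable_const).stronglyMeasurable
      have h2 : (fun ω => d t ω / paA m i t ^ s) = fun ω => d t ω * (paA m i t ^ s)⁻¹ := by
        funext ω; rw [div_eq_mul_inv]
      exact (h2 ▸ h1).add stronglyMeasurable_const
  -- supermartingale step
  have hstep : ∀ t, i + 1 ≤ t →
      μ[fun ω => d (t + 1) ω / paA m i (t + 1) ^ s
          + (m : ℝ) * ∑' k : ℕ, cPAAPA m (t + 1 + k) / paA m i (t + 1 + k) ^ s | ℱ t]
        ≤ᵐ[μ] fun ω => d t ω / paA m i t ^ s
          + (m : ℝ) * ∑' k : ℕ, cPAAPA m (t + k) / paA m i (t + k) ^ s := by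
    intro t ht
    have hti : i ≤ t := by omega
    set b := paA m i (t + 1) ^ s with hb_def
    set a := paA m i t ^ s with ha_def
    have ha : 0 < a := hApos t ht
    have hb : 0 < b := hApos (t + 1) (by omega)
    have hab : a ≤ b := by
      rw [ha_def, hb_def]
      exact Real.rpow_le_rpow (paA_pos hm hi ht).le (paA_mono hm hi (by omega)) (by linarith)
    set K := (m : ℝ) * ∑' k : ℕ, cPAAPA m (t + 1 + k) / paA m i (t + 1 + k) ^ s with hK_def
    have heq : (fun ω => d (t + 1) ω / b + K) = (b⁻¹ • d (t + 1)) + (fun _ => K) := by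
      funext ω
      show d (t + 1) ω / b + K = b⁻¹ * d (t + 1) ω + K
      rw [div_eq_inv_mul]
    rw [heq]
    have h1 := condExp_add (μ := μ) (m := ℱ t) ((hint (t + 1)).smul b⁻¹) (integrable_const K)
    have h2 := condExp_smul (μ := μ) (m := ℱ t) b⁻¹ (d (t + 1))
    have h3 := condExp_const (μ := μ) (ℱ.le t) K
    filter_upwards [h1, h2, hcond t hti, hnonneg t] with ω hadd hsmul hc hd
    have hB := tsum_split (s := s) hm hi hs ht
    have he0 : 0 ≤ ePAAPA m t := e_nonneg hm (by omega)
    have he1 : ePAAPA m t ≤ 1 := e_le_one hm (by omega)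
    have hcpos : 0 < cPAAPA m t := c_pos hm (by omega)
    have hd' : (0:ℝ) ≤ d t ω := hd
    have hiv : b⁻¹ ≤ a⁻¹ := inv_anti₀ ha hab
    have hB' : (0:ℝ) ≤ ∑' k : ℕ, cPAAPA m (t + 1 + k) / paA m i (t + 1 + k) ^ s :=
      tsum_nn (s := s) hm hi (by omega)
    calc (μ[b⁻¹ • d (t + 1) + (fun _ => K)|ℱ t]) ω
        = (μ[b⁻¹ • d (t + 1)|ℱ t]) ω + (μ[fun _ => K|ℱ t]) ω := hadd
      _ = b⁻¹ * (μ[d (t + 1)|ℱ t]) ω + K := by rw [h3]; exact congrArg (· + K) hsmul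
      _ = b⁻¹ * (d t ω * (1 - ePAAPA m t) + (m : ℝ) * cPAAPA m t) + K := by rw [hc]
      _ ≤ d t ω / a + (m : ℝ) * ∑' k : ℕ, cPAAPA m (t + k) / paA m i (t + k) ^ s := by
          rw [hB, hK_def]
          have p1 : b⁻¹ * (d t ω * (1 - ePAAPA m t)) ≤ a⁻¹ * d t ω := by
            apply mul_le_mul hiv (by nlinarith) (by nlinarith) (by positivity)
          have p2 : b⁻¹ * ((m : ℝ) * cPAAPA m t) ≤ a⁻¹ * ((m : ℝ) * cPAAPA m t) :=
            mul_le_mul_of_nonneg_right hiv (by positivity)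
          have e1 : b⁻¹ * (d t ω * (1 - ePAAPA m t) + (m : ℝ) * cPAAPA m t)
              = b⁻¹ * (d t ω * (1 - ePAAPA m t)) + b⁻¹ * ((m : ℝ) * cPAAPA m t) := by ring
          have e2 : d t ω / a = a⁻¹ * d t ω := div_eq_inv_mul _ _
          have e3 : (m : ℝ) * (cPAAPA m t / a
              + ∑' k : ℕ, cPAAPA m (t + 1 + k) / paA m i (t + 1 + k) ^ s)
              = a⁻¹ * ((m : ℝ) * cPAAPA m t)
                + (m : ℝ) * ∑' k : ℕ, cPAAPA m (t + 1 + k) / paA m i (t + 1 + k) ^ s := by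
            rw [div_eq_inv_mul]; ring
          rw [e1, e2, e3]
          linarith
  refine ⟨fun t ht => summable_main hm hi hs ht, fun t ht => ⟨hnn t ht, hintS t, hmeasS t, hstep t ht⟩, ?_⟩
  -- convergence of the nonnegative supermartingale
  set 𝒢 : Filtration ℕ m0 :=
    { seq := fun n => ℱ (i + 1 + n)
      mono' := fun a b hab => ℱ.mono (by omega)
      le' := fun n => ℱ.le _ } with h𝒢_def
  set Y : ℕ → Ω → ℝ := fun n ω => d (i + 1 + n) ω / paA m i (i + 1 + n) ^ s
      + (m : ℝ) * ∑' k : ℕ, cPAAPA m (i + 1 + n + k) / paA m i (i + 1 + n + k) ^ s with hY_def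
  have hYsuper : Supermartingale Y 𝒢 μ := by
    refine supermartingale_nat (fun n => hmeasS (i + 1 + n)) (fun n => hintS (i + 1 + n))
      (fun n => ?_)
    exact hstep (i + 1 + n) (by omega)
  have hYnn : ∀ n, 0 ≤ᵐ[μ] Y n := fun n => hnn (i + 1 + n) (by omega)
  set R : NNReal := (∫ ω, Y 0 ω ∂μ).toNNReal with hR_def
  have hbdd : ∀ n, eLpNorm ((-Y) n) 1 μ ≤ R := by
    intro n
    have h0 : eLpNorm ((-Y) n) 1 μ = eLpNorm (Y n) 1 μ :=
      eLpNorm_neg (f := Y n) (p := 1) (μ := μ)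
    have h1 : eLpNorm (Y n) 1 μ = ENNReal.ofReal (∫ ω, Y n ω ∂μ) := by
      rw [eLpNorm_one_eq_lintegral_enorm,
        ← ofReal_integral_norm_eq_lintegral_enorm (hintS (i + 1 + n))]
      congr 1
      apply integral_congr_ae
      filter_upwards [hYnn n] with ω hω
      exact Real.norm_of_nonneg hω
    have h2 : ∫ ω, Y n ω ∂μ ≤ ∫ ω, Y 0 ω ∂μ := by
      have h3 := hYsuper.2.1 0 n (Nat.zero_le n)
      calc ∫ ω, Y n ω ∂μ = ∫ ω, (μ[Y n|𝒢 0]) ω ∂μ := (integral_condExp (𝒢.le 0)).symm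
        _ ≤ ∫ ω, Y 0 ω ∂μ := integral_mono_ae integrable_condExp (hintS (i + 1 + 0)) h3
    rw [h0, h1]
    calc ENNReal.ofReal (∫ ω, Y n ω ∂μ) ≤ ENNReal.ofReal (∫ ω, Y 0 ω ∂μ) :=
          ENNReal.ofReal_le_ofReal h2
      _ = (R : ENNReal) := rfl
  have hZsub : Submartingale (-Y) 𝒢 μ := hYsuper.neg
  have hconv := hZsub.ae_tendsto_limitProcess hbdd
  have hLint : Integrable (𝒢.limitProcess (-Y) μ) μ :=
    memLp_one_iff_integrable.mp (hZsub.memLp_limitProcess hbdd)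
  refine ⟨fun ω => -(𝒢.limitProcess (-Y) μ ω), hLint.neg, ?_⟩
  have hallnn : ∀ᵐ ω ∂μ, ∀ n, (0:ℝ) ≤ Y n ω := ae_all_iff.2 hYnn
  filter_upwards [hconv, hallnn] with ω hω hωnn
  have hYtend : Tendsto (fun n => Y n ω) atTop (nhds (-(𝒢.limitProcess (-Y) μ ω))) := by
    have h4 := hω.neg
    simp only [Pi.neg_apply, neg_neg] at h4
    exact h4
  refine ⟨ge_of_tendsto' hYtend hωnn, ?_⟩
  rw [show (nhds (-(𝒢.limitProcess (-Y) μ ω))) = nhds (-(𝒢.limitProcess (-Y) μ ω)) from rfl]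
  have hgoal : Tendsto (fun t : ℕ => d t ω / paA m i t ^ s
      + (m : ℝ) * ∑' k : ℕ, cPAAPA m (t + k) / paA m i (t + k) ^ s) atTop
      (nhds (-(𝒢.limitProcess (-Y) μ ω))) := by
    rw [← tendsto_add_atTop_iff_nat (i + 1)]
    exact hYtend.congr fun n => by rw [Nat.add_comm]
  exact hgoal
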